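/- arXiv:2106.10100 — 2 statements merged into one kernel-verified Lean document; each statement's English description precedes it below -/
import Mathlib

section
/- Let n ≥ 2 and let t_1, …, t_n be lattice terms over a variable type β. Then t_1, …, t_n are Lat-dependent if and only if there exists i ∈ Fin n such that ⊨_Lat t_i ≤ ⊔_{j ≠ i} t_j or ⊨_Lat ⊓_{j ≠ i} t_j ≤ t_i, where ⊔_{j ≠ i} t_j and ⊓_{j ≠ i} t_j denote the join, respectively meet, with some fixed bracketing, of the terms t_j with j ≠ i. -/
/-- Lattice terms over variable type `α`: first-order terms in the language with exactly
two binary function symbols (meet and join). -/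
inductive LatTerm (α : Type) : Type
  | var : α → LatTerm α
  | meet : LatTerm α → LatTerm α → LatTerm α
  | join : LatTerm α → LatTerm α → LatTerm α

namespace LatTerm

/-- Realization of a lattice term in a lattice `M` under a valuation `v`. -/
def realize {α M : Type} [Lattice M] (v : α → M) : LatTerm α → M
  | var a => v a
  | meet s t => realize v s ⊓ realize v t
  | join s t => realize v s ⊔ realize v t

/-- Simultaneous substitution of lattice terms for variables. -/
def subst {α β : Type} (σ : α → LatTerm β) : LatTerm α → LatTerm β
  | var a => σ a
  | meet s t => meet (subst σ s) (subst σ t)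
  | join s t => join (subst σ s) (subst σ t)

end LatTerm

/-- A lattice equation: a pair of lattice terms. -/
abbrev LatEq (α : Type) : Type := LatTerm α × LatTerm α

/-- The inequation `s ≤ t`, as the equation `s ⊓ t ≈ s`. -/
def leEq {α : Type} (s t : LatTerm α) : LatEq α := (s.meet t, s)

/-- Lat-validity: the two terms have equal realizations in every lattice under
every valuation. -/
def LatValid {α : Type} (e : LatEq α) : Prop :=
  ∀ (M : Type) [Lattice M] (v : α → M), e.1.realize v = e.2.realize v

/-- The join, with a fixed bracketing, of `f 0, …, f m`. -/
def finJoin {α : Type} : {m : ℕ} → (Fin (m + 1) → LatTerm α) → LatTerm α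
  | 0, f => f 0
  | _ + 1, f => LatTerm.join (finJoin fun k => f k.castSucc) (f (Fin.last _))

/-- The meet, with a fixed bracketing, of `f 0, …, f m`. -/
def finMeet {α : Type} : {m : ℕ} → (Fin (m + 1) → LatTerm α) → LatTerm α
  | 0, f => f 0
  | _ + 1, f => LatTerm.meet (finMeet fun k => f k.castSucc) (f (Fin.last _))


/-- `t 0, …, t (n-1)` are Lat-dependent: some equation `e` over `Fin n` satisfies
`⊨_Lat e(t 0, …, t (n-1))` but not `⊨_Lat e`. -/
def LatDependent {β : Type} {n : ℕ} (t : Fin n → LatTerm β) : Prop :=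
  ∃ e : LatEq (Fin n), LatValid (e.1.subst t, e.2.subst t) ∧ ¬ LatValid e

namespace LatTerm

variable {α : Type}

/-- Whitman-style entailment calculus for lattice terms. -/
inductive Le : LatTerm α → LatTerm α → Prop
  | var_refl (a : α) : Le (var a) (var a)
  | join_left {s t u : LatTerm α} : Le s u → Le t u → Le (join s t) u
  | meet_right {s t u : LatTerm α} : Le s t → Le s u → Le s (meet t u)
  | meet_left_l {s t u : LatTerm α} : Le s u → Le (meet s t) u
  | meet_left_r {s t u : LatTerm α} : Le t u → Le (meet s t) u
  | join_right_l {s t u : LatTerm α} : Le s t → Le s (join t u)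
  | join_right_r {s t u : LatTerm α} : Le s u → Le s (join t u)

def size : LatTerm α → ℕ
  | var _ => 1
  | meet s t => size s + size t + 1
  | join s t => size s + size t + 1

theorem Le.refl : ∀ t : LatTerm α, Le t t
  | var a => .var_refl a
  | meet s t => .meet_right (.meet_left_l (Le.refl s)) (.meet_left_r (Le.refl t))
  | join s t => .join_left (.join_right_l (Le.refl s)) (.join_right_r (Le.refl t))

theorem le_trans_aux : ∀ N : ℕ, ∀ a b c : LatTerm α, size a + size b + size c ≤ N →
    Le a b → Le b c → Le a c := by
  intro N
  induction N with
  | zero =>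
    intro a b c h
    cases a <;> simp [size] at h
  | succ N ih =>
    intro a b c hs h1 h2
    cases h1 with
    | var_refl a => exact h2
    | join_left hA hB =>
      refine .join_left (ih _ _ _ ?_ hA h2) (ih _ _ _ ?_ hB h2) <;>
        simp [size] at hs ⊢ <;> omega
    | meet_left_l hA =>
      exact .meet_left_l (ih _ _ _ (by simp [size] at hs ⊢; omega) hA h2)
    | meet_left_r hA =>
      exact .meet_left_r (ih _ _ _ (by simp [size] at hs ⊢; omega) hA h2)
    | meet_right hA hB =>
      cases h2 with
      | meet_right hC hD =>
        refine .meet_right (ih _ _ _ ?_ (.meet_right hA hB) hC)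
          (ih _ _ _ ?_ (.meet_right hA hB) hD) <;> simp [size] at hs ⊢ <;> omega
      | meet_left_l hC =>
        exact ih _ _ _ (by simp [size] at hs ⊢; omega) hA hC
      | meet_left_r hC =>
        exact ih _ _ _ (by simp [size] at hs ⊢; omega) hB hC
      | join_right_l hC =>
        exact .join_right_l (ih _ _ _ (by simp [size] at hs ⊢; omega) (.meet_right hA hB) hC)
      | join_right_r hC =>
        exact .join_right_r (ih _ _ _ (by simp [size] at hs ⊢; omega) (.meet_right hA hB) hC)
    | join_right_l hA =>
      cases h2 with
      | join_left hC hD =>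
        exact ih _ _ _ (by simp [size] at hs ⊢; omega) hA hC
      | meet_right hC hD =>
        refine .meet_right (ih _ _ _ ?_ (.join_right_l hA) hC)
          (ih _ _ _ ?_ (.join_right_l hA) hD) <;> simp [size] at hs ⊢ <;> omega
      | join_right_l hC =>
        exact .join_right_l (ih _ _ _ (by simp [size] at hs ⊢; omega) (.join_right_l hA) hC)
      | join_right_r hC =>
        exact .join_right_r (ih _ _ _ (by simp [size] at hs ⊢; omega) (.join_right_l hA) hC)
    | join_right_r hA =>
      cases h2 with
      | join_left hC hD =>
        exact ih _ _ _ (by simp [size] at hs ⊢; omega) hA hD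
      | meet_right hC hD =>
        refine .meet_right (ih _ _ _ ?_ (.join_right_r hA) hC)
          (ih _ _ _ ?_ (.join_right_r hA) hD) <;> simp [size] at hs ⊢ <;> omega
      | join_right_l hC =>
        exact .join_right_l (ih _ _ _ (by simp [size] at hs ⊢; omega) (.join_right_r hA) hC)
      | join_right_r hC =>
        exact .join_right_r (ih _ _ _ (by simp [size] at hs ⊢; omega) (.join_right_r hA) hC)

theorem Le.trans {a b c : LatTerm α} (h1 : Le a b) (h2 : Le b c) : Le a c :=
  le_trans_aux (size a + size b + size c) a b c le_rfl h1 h2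

theorem Le.join_left_inv {s t u : LatTerm α} (h : Le (join s t) u) : Le s u ∧ Le t u :=
  ⟨(Le.join_right_l (Le.refl s)).trans h, (Le.join_right_r (Le.refl t)).trans h⟩

theorem Le.meet_right_inv {s t u : LatTerm α} (h : Le s (meet t u)) : Le s t ∧ Le s u :=
  ⟨h.trans (Le.meet_left_l (Le.refl t)), h.trans (Le.meet_left_r (Le.refl u))⟩

theorem Le.var_var_inv {x y : α} (h : Le (var x) (var y)) : x = y := by
  cases h; rfl

theorem Le.var_join_inv {x : α} {c d : LatTerm α} (h : Le (var x) (join c d)) :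
    Le (var x) c ∨ Le (var x) d := by
  cases h with
  | join_right_l h => exact .inl h
  | join_right_r h => exact .inr h

theorem Le.meet_var_inv {x : α} {a b : LatTerm α} (h : Le (meet a b) (var x)) :
    Le a (var x) ∨ Le b (var x) := by
  cases h with
  | meet_left_l h => exact .inl h
  | meet_left_r h => exact .inr h

theorem Le.whitman {a b c d : LatTerm α} (h : Le (meet a b) (join c d)) :
    Le a (join c d) ∨ Le b (join c d) ∨ Le (meet a b) c ∨ Le (meet a b) d := by
  cases h with
  | meet_left_l h => exact .inl h
  | meet_left_r h => exact .inr (.inl h)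
  | join_right_l h => exact .inr (.inr (.inl h))
  | join_right_r h => exact .inr (.inr (.inr h))

/-- Soundness of the calculus. -/
theorem Le.realize_le {M : Type} [Lattice M] (v : α → M) {s t : LatTerm α} (h : Le s t) :
    s.realize v ≤ t.realize v := by
  induction h with
  | var_refl a => exact le_rfl
  | join_left _ _ ih1 ih2 => exact sup_le ih1 ih2
  | meet_right _ _ ih1 ih2 => exact le_inf ih1 ih2
  | meet_left_l _ ih => exact inf_le_left.trans ih
  | meet_left_r _ ih => exact inf_le_right.trans ih
  | join_right_l _ ih => exact ih.trans le_sup_left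
  | join_right_r _ ih => exact ih.trans le_sup_right

end LatTerm

open LatTerm

/-- The free lattice on `α` as a quotient of terms. -/
def latSetoid (α : Type) : Setoid (LatTerm α) where
  r s t := Le s t ∧ Le t s
  iseqv := ⟨fun t => ⟨Le.refl t, Le.refl t⟩, fun ⟨h1, h2⟩ => ⟨h2, h1⟩,
    fun ⟨h1, h2⟩ ⟨h3, h4⟩ => ⟨h1.trans h3, h4.trans h2⟩⟩

abbrev FreeLat (α : Type) : Type := Quotient (latSetoid α)

namespace FreeLat

variable {α : Type}

instance : Lattice (FreeLat α) where
  le := Quotient.lift₂ (fun s t => Le s t) (by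
    rintro a b a' b' ⟨h1, h1'⟩ ⟨h2, h2'⟩
    exact propext ⟨fun h => h1'.trans (h.trans h2), fun h => h1.trans (h.trans h2')⟩)
  le_refl := by rintro ⟨a⟩; exact Le.refl a
  le_trans := by rintro ⟨a⟩ ⟨b⟩ ⟨c⟩ h1 h2; exact Le.trans h1 h2
  le_antisymm := by rintro ⟨a⟩ ⟨b⟩ h1 h2; exact Quotient.sound ⟨h1, h2⟩
  sup := Quotient.map₂ LatTerm.join (by
    rintro a a' ⟨h1, h1'⟩ b b' ⟨h2, h2'⟩
    exact ⟨.join_left (h1.trans (.join_right_l (Le.refl _))) (h2.trans (.join_right_r (Le.refl _))),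
      .join_left (h1'.trans (.join_right_l (Le.refl _))) (h2'.trans (.join_right_r (Le.refl _)))⟩)
  le_sup_left := by rintro ⟨a⟩ ⟨b⟩; exact Le.join_right_l (Le.refl a)
  le_sup_right := by rintro ⟨a⟩ ⟨b⟩; exact Le.join_right_r (Le.refl b)
  sup_le := by rintro ⟨a⟩ ⟨b⟩ ⟨c⟩ h1 h2; exact Le.join_left h1 h2
  inf := Quotient.map₂ LatTerm.meet (by
    rintro a a' ⟨h1, h1'⟩ b b' ⟨h2, h2'⟩
    exact ⟨.meet_right (.meet_left_l h1) (.meet_left_r h2),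
      .meet_right (.meet_left_l h1') (.meet_left_r h2')⟩)
  inf_le_left := by rintro ⟨a⟩ ⟨b⟩; exact Le.meet_left_l (Le.refl a)
  inf_le_right := by rintro ⟨a⟩ ⟨b⟩; exact Le.meet_left_r (Le.refl b)
  le_inf := by rintro ⟨a⟩ ⟨b⟩ ⟨c⟩ h1 h2; exact Le.meet_right h1 h2

theorem realize_mk (u : LatTerm α) :
    u.realize (fun a => (⟦LatTerm.var a⟧ : FreeLat α)) = ⟦u⟧ := by
  induction u with
  | var a => rfl
  | meet s t ihs iht => show _ ⊓ _ = _; rw [ihs, iht]; rfl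
  | join s t ihs iht => show _ ⊔ _ = _; rw [ihs, iht]; rfl

end FreeLat

/-- Completeness: validity coincides with derivability. -/
theorem latValid_iff {α : Type} {u v : LatTerm α} :
    LatValid (u, v) ↔ Le u v ∧ Le v u := by
  constructor
  · intro h
    have := h (FreeLat α) (fun a => ⟦LatTerm.var a⟧)
    simp only [FreeLat.realize_mk] at this
    exact Quotient.exact this
  · rintro ⟨h1, h2⟩ M _ w
    exact le_antisymm (h1.realize_le w) (h2.realize_le w)

theorem latValid_leEq {α : Type} {s t : LatTerm α} :
    LatValid (leEq s t) ↔ Le s t := by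
  rw [show leEq s t = (s.meet t, s) from rfl, latValid_iff]
  constructor
  · rintro ⟨-, h⟩
    exact h.trans (Le.meet_left_r (Le.refl t))
  · intro h
    exact ⟨Le.meet_left_l (Le.refl s), Le.meet_right (Le.refl s) h⟩

section FinJoinMeet

variable {α β : Type}

theorem le_finJoin : ∀ {m : ℕ} (f : Fin (m + 1) → LatTerm α) (k : Fin (m + 1)),
    Le (f k) (finJoin f)
  | 0, f, k => by
    have : k = 0 := Fin.ext (by omega)
    subst this; exact Le.refl _
  | m + 1, f, k => by
    show Le (f k) (LatTerm.join (finJoin fun j => f j.castSucc) (f (Fin.last _)))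
    induction k using Fin.lastCases with
    | last => exact Le.join_right_r (Le.refl _)
    | cast j => exact Le.join_right_l (le_finJoin (fun j => f j.castSucc) j)

theorem finMeet_le : ∀ {m : ℕ} (f : Fin (m + 1) → LatTerm α) (k : Fin (m + 1)),
    Le (finMeet f) (f k)
  | 0, f, k => by
    have : k = 0 := Fin.ext (by omega)
    subst this; exact Le.refl _
  | m + 1, f, k => by
    show Le (LatTerm.meet (finMeet fun j => f j.castSucc) (f (Fin.last _))) (f k)
    induction k using Fin.lastCases with
    | last => exact Le.meet_left_r (Le.refl _)
    | cast j => exact Le.meet_left_l (finMeet_le (fun j => f j.castSucc) j)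

theorem subst_finJoin (σ : α → LatTerm β) :
    ∀ {m : ℕ} (f : Fin (m + 1) → LatTerm α),
      (finJoin f).subst σ = finJoin fun k => (f k).subst σ
  | 0, f => rfl
  | m + 1, f => by
    show LatTerm.join _ _ = LatTerm.join _ _
    rw [subst_finJoin σ fun k => f k.castSucc]

theorem subst_finMeet (σ : α → LatTerm β) :
    ∀ {m : ℕ} (f : Fin (m + 1) → LatTerm α),
      (finMeet f).subst σ = finMeet fun k => (f k).subst σ
  | 0, f => rfl
  | m + 1, f => by
    show LatTerm.meet _ _ = LatTerm.meet _ _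
    rw [subst_finMeet σ fun k => f k.castSucc]

theorem var_finJoin_inv : ∀ {m : ℕ} {f : Fin (m + 1) → LatTerm α} {x : α},
    Le (LatTerm.var x) (finJoin f) → ∃ k, Le (LatTerm.var x) (f k)
  | 0, f, x, h => ⟨0, h⟩
  | m + 1, f, x, h => by
    rcases Le.var_join_inv h with h | h
    · obtain ⟨k, hk⟩ := var_finJoin_inv h
      exact ⟨k.castSucc, hk⟩
    · exact ⟨Fin.last _, h⟩

theorem finMeet_var_inv : ∀ {m : ℕ} {f : Fin (m + 1) → LatTerm α} {x : α},
    Le (finMeet f) (LatTerm.var x) → ∃ k, Le (f k) (LatTerm.var x)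
  | 0, f, x, h => ⟨0, h⟩
  | m + 1, f, x, h => by
    rcases Le.meet_var_inv h with h | h
    · obtain ⟨k, hk⟩ := finMeet_var_inv h
      exact ⟨k.castSucc, hk⟩
    · exact ⟨Fin.last _, h⟩

end FinJoinMeet

section Main

variable {β : Type} {m : ℕ}

/-- If `x_i ≰ v` syntactically, then `v(t)` lies below the join of the `t j`, `j ≠ i`. -/
theorem lemD {t : Fin (m + 2) → LatTerm β} {i : Fin (m + 2)} :
    ∀ v : LatTerm (Fin (m + 2)), ¬ Le (LatTerm.var i) v →
      Le (v.subst t) (finJoin fun k => t (i.succAbove k)) := by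
  intro v
  induction v with
  | var j =>
    intro h
    have hij : j ≠ i := by rintro rfl; exact h (Le.refl _)
    obtain ⟨k, hk⟩ := Fin.exists_succAbove_eq hij
    show Le (t j) _
    rw [← hk]
    exact le_finJoin (fun k => t (i.succAbove k)) k
  | meet v1 v2 ih1 ih2 =>
    intro h
    by_cases h1 : Le (LatTerm.var i) v1
    · have h2 : ¬ Le (LatTerm.var i) v2 := fun h2 => h (.meet_right h1 h2)
      exact Le.meet_left_r (ih2 h2)
    · exact Le.meet_left_l (ih1 h1)
  | join v1 v2 ih1 ih2 =>
    intro h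
    exact Le.join_left (ih1 fun hh => h (.join_right_l hh)) (ih2 fun hh => h (.join_right_r hh))

/-- Dual of `lemD`. -/
theorem lemE {t : Fin (m + 2) → LatTerm β} {i : Fin (m + 2)} :
    ∀ u : LatTerm (Fin (m + 2)), ¬ Le u (LatTerm.var i) →
      Le (finMeet fun k => t (i.succAbove k)) (u.subst t) := by
  intro u
  induction u with
  | var j =>
    intro h
    have hij : j ≠ i := by rintro rfl; exact h (Le.refl _)
    obtain ⟨k, hk⟩ := Fin.exists_succAbove_eq hij
    show Le _ (t j)
    rw [← hk]
    exact finMeet_le (fun k => t (i.succAbove k)) k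
  | meet u1 u2 ih1 ih2 =>
    intro h
    have h1 : ¬ Le u1 (LatTerm.var i) := fun hh => h (.meet_left_l hh)
    have h2 : ¬ Le u2 (LatTerm.var i) := fun hh => h (.meet_left_r hh)
    exact Le.meet_right (ih1 h1) (ih2 h2)
  | join u1 u2 ih1 ih2 =>
    intro h
    by_cases h1 : Le u1 (LatTerm.var i)
    · have h2 : ¬ Le u2 (LatTerm.var i) := fun h2 => h (.join_left h1 h2)
      exact Le.join_right_r (ih2 h2)
    · exact Le.join_right_l (ih1 h1)

/-- Jónsson's free-generation lemma: under the independence conditions, substitution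
by `t` reflects entailment. -/
theorem mainLemma {t : Fin (m + 2) → LatTerm β}
    (hJ : ∀ i, ¬ Le (t i) (finJoin fun k => t (i.succAbove k)))
    (hM : ∀ i, ¬ Le (finMeet fun k => t (i.succAbove k)) (t i)) :
    ∀ N : ℕ, ∀ u v : LatTerm (Fin (m + 2)), size u + size v ≤ N →
      Le (u.subst t) (v.subst t) → Le u v := by
  intro N
  induction N with
  | zero =>
    intro u v h
    cases u <;> simp [size] at h
  | succ N ih =>
    intro u v hs h
    match u, v with
    | .var i, v =>
      by_contra hc
      exact hJ i (h.trans (lemD v hc))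
    | .meet u1 u2, .var j =>
      by_contra hc
      exact hM j ((lemE _ hc).trans h)
    | .join u1 u2, .var j =>
      by_contra hc
      exact hM j ((lemE _ hc).trans h)
    | .join u1 u2, v =>
      obtain ⟨h1, h2⟩ := Le.join_left_inv h
      refine Le.join_left (ih u1 v ?_ h1) (ih u2 v ?_ h2) <;> simp [size] at hs ⊢ <;> omega
    | .meet u1 u2, .meet v1 v2 =>
      obtain ⟨h1, h2⟩ := Le.meet_right_inv h
      refine Le.meet_right (ih _ v1 ?_ h1) (ih _ v2 ?_ h2) <;> simp [size] at hs ⊢ <;> omega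
    | .meet u1 u2, .join v1 v2 =>
      rcases Le.whitman h with h' | h' | h' | h'
      · exact Le.meet_left_l (ih u1 (.join v1 v2) (by simp [size] at hs ⊢; omega) h')
      · exact Le.meet_left_r (ih u2 (.join v1 v2) (by simp [size] at hs ⊢; omega) h')
      · exact Le.join_right_l (ih (.meet u1 u2) v1 (by simp [size] at hs ⊢; omega) h')
      · exact Le.join_right_r (ih (.meet u1 u2) v2 (by simp [size] at hs ⊢; omega) h')

end Main

theorem stmt6 (m : ℕ) {β : Type} (t : Fin (m + 2) → LatTerm β) :
    LatDependent t ↔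
      ∃ i : Fin (m + 2),
        LatValid (leEq (t i) (finJoin fun k : Fin (m + 1) => t (i.succAbove k))) ∨
        LatValid (leEq (finMeet fun k : Fin (m + 1) => t (i.succAbove k)) (t i)) := by
  constructor
  · rintro ⟨⟨e1, e2⟩, hval, hnval⟩
    by_contra hno
    push_neg at hno
    apply hnval
    have hJ : ∀ i, ¬ Le (t i) (finJoin fun k => t (i.succAbove k)) :=
      fun i h => (hno i).1 (latValid_leEq.mpr h)
    have hM : ∀ i, ¬ Le (finMeet fun k => t (i.succAbove k)) (t i) :=
      fun i h => (hno i).2 (latValid_leEq.mpr h)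
    obtain ⟨h1, h2⟩ := latValid_iff.mp hval
    exact latValid_iff.mpr
      ⟨mainLemma hJ hM _ e1 e2 le_rfl h1, mainLemma hJ hM _ e2 e1 le_rfl h2⟩
  · rintro ⟨i, h | h⟩
    · refine ⟨leEq (.var i) (finJoin fun k => .var (i.succAbove k)), ?_, ?_⟩
      · have key : ((finJoin fun k => LatTerm.var (i.succAbove k)).subst t)
            = finJoin fun k => t (i.succAbove k) := by
          rw [subst_finJoin]; rfl
        show LatValid (((LatTerm.var i).meet
          (finJoin fun k => LatTerm.var (i.succAbove k))).subst t, (LatTerm.var i).subst t)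
        simp only [LatTerm.subst, key]
        exact h
      · intro hv
        obtain ⟨k, hk⟩ := var_finJoin_inv (latValid_leEq.mp hv)
        exact Fin.succAbove_ne i k hk.var_var_inv.symm
    · refine ⟨leEq (finMeet fun k => .var (i.succAbove k)) (.var i), ?_, ?_⟩
      · have key : ((finMeet fun k => LatTerm.var (i.succAbove k)).subst t)
            = finMeet fun k => t (i.succAbove k) := by
          rw [subst_finMeet]; rfl
        show LatValid (((finMeet fun k => LatTerm.var (i.succAbove k)).meet
          (LatTerm.var i)).subst t, (finMeet fun k => LatTerm.var (i.succAbove k)).subst t)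
        simp only [LatTerm.subst, key]
        exact h
      · intro hv
        obtain ⟨k, hk⟩ := finMeet_var_inv (latValid_leEq.mp hv)
        exact Fin.succAbove_ne i k hk.var_var_inv
end

section
/- For every n ≥ 2, the set Δ_n^{DL} := { ⊓_{i ∈ I} y_i ≤ ⊔_{j ∈ Fin n \ I} y_j : I a nonempty proper subset of Fin n } is DLat-refuting for the variables of Fin n: for every lattice equation ε over Fin n, ε fails to be DLat-valid if and only if {ε} ⊢~_DLat Δ_n^{DL}. -/
/-- DLat-validity: equal realizations in every distributive lattice under every valuation. -/
def DLatValid {α : Type} (e : LatEq α) : Prop :=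
  ∀ (M : Type) [DistribLattice M] (v : α → M), e.1.realize v = e.2.realize v

/-- `Γ ⊢~_DLat Δ`. -/
def DLatAdm {n : ℕ} (Γ Δ : Set (LatEq (Fin n))) : Prop :=
  ∀ σ : Fin n → LatTerm ℕ,
    (∀ e ∈ Γ, DLatValid (e.1.subst σ, e.2.subst σ)) →
      ∃ d ∈ Δ, DLatValid (d.1.subst σ, d.2.subst σ)

/-- `Δ` is DLat-refuting for the variables of `Fin n`. -/
def DLatRefuting {n : ℕ} (Δ : Set (LatEq (Fin n))) : Prop :=
  ∀ e : LatEq (Fin n), ¬ DLatValid e ↔ DLatAdm {e} Δ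

/-- The join, with a fixed bracketing, of a nonempty list of lattice terms. -/
def joinListNE {α : Type} : (l : List (LatTerm α)) → l ≠ [] → LatTerm α
  | [], h => absurd rfl h
  | a :: l, _ => l.foldl LatTerm.join a

/-- The meet, with a fixed bracketing, of a nonempty list of lattice terms. -/
def meetListNE {α : Type} : (l : List (LatTerm α)) → l ≠ [] → LatTerm α
  | [], h => absurd rfl h
  | a :: l, _ => l.foldl LatTerm.meet a

/-- The join, with a fixed bracketing and order, of `f i` for `i` in a nonempty finset `s`. -/
noncomputable def finsetJoin {γ α : Type} (s : Finset γ) (hs : s.Nonempty)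
    (f : γ → LatTerm α) : LatTerm α :=
  joinListNE (s.toList.map f)
    (by simp only [ne_eq, List.map_eq_nil_iff, Finset.toList_eq_nil]; exact hs.ne_empty)

/-- The meet, with a fixed bracketing and order, of `f i` for `i` in a nonempty finset `s`. -/
noncomputable def finsetMeet {γ α : Type} (s : Finset γ) (hs : s.Nonempty)
    (f : γ → LatTerm α) : LatTerm α :=
  meetListNE (s.toList.map f)
    (by simp only [ne_eq, List.map_eq_nil_iff, Finset.toList_eq_nil]; exact hs.ne_empty)

/-- The set `Δ_n^{DL}` (for `n = m + 2`) of equations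
`⊓_{i ∈ I} y_i ≤ ⊔_{j ∈ Fin n \ I} y_j` for `I` a nonempty proper subset of `Fin n`
(properness being recorded by the nonemptiness of the complement of `I`). -/
def DeltaDL (m : ℕ) : Set (LatEq (Fin (m + 2))) :=
  { e | ∃ (I : Finset (Fin (m + 2))) (hI : I.Nonempty) (_ : I ≠ Finset.univ)
          (hc : Iᶜ.Nonempty),
      e = leEq (finsetMeet I hI LatTerm.var) (finsetJoin Iᶜ hc LatTerm.var) }

namespace LatTerm

lemma realize_subst' {α β M : Type} [Lattice M] (σ : α → LatTerm β) (v : β → M) :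
    ∀ t : LatTerm α, (t.subst σ).realize v = t.realize (fun a => (σ a).realize v)
  | var a => rfl
  | meet s t => by
      simp only [subst, realize, realize_subst' σ v s, realize_subst' σ v t]
  | join s t => by
      simp only [subst, realize, realize_subst' σ v s, realize_subst' σ v t]

lemma realize_map {α M N : Type} [Lattice M] [Lattice N] (f : M → N)
    (hinf : ∀ x y, f (x ⊓ y) = f x ⊓ f y) (hsup : ∀ x y, f (x ⊔ y) = f x ⊔ f y)
    (v : α → M) : ∀ t : LatTerm α, t.realize (fun a => f (v a)) = f (t.realize v)
  | var a => rfl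
  | meet s t => by
      simp only [realize, realize_map f hinf hsup v s, realize_map f hinf hsup v t, hinf]
  | join s t => by
      simp only [realize, realize_map f hinf hsup v s, realize_map f hinf hsup v t, hsup]

lemma realize_const {α M : Type} [Lattice M] (c : M) :
    ∀ t : LatTerm α, t.realize (fun _ => c) = c
  | var _ => rfl
  | meet s t => by simp [realize, realize_const c s, realize_const c t]
  | join s t => by simp [realize, realize_const c s, realize_const c t]

end LatTerm

/-- From a prime ideal separating `a` from `b`, a `Bool`-valued lattice "hom". -/
lemma exists_bool_hom {M : Type} [DistribLattice M] [BoundedOrder M] {a b : M}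
    (h : ¬ a ≤ b) :
    ∃ f : M → Bool, (∀ x y, f (x ⊓ y) = f x ⊓ f y) ∧ (∀ x y, f (x ⊔ y) = f x ⊔ f y) ∧
      f a = true ∧ f b = false := by
  classical
  have hdisj : Disjoint ((Order.PFilter.principal a : Order.PFilter M) : Set M)
      ((Order.Ideal.principal b : Order.Ideal M) : Set M) := by
    rw [Set.disjoint_left]
    intro x hx hxb
    exact h (le_trans (Order.PFilter.mem_principal.mp hx) (Order.Ideal.mem_principal.mp hxb))
  obtain ⟨J, hJprime, hIJ, hdisjJ⟩ :=
    DistribLattice.prime_ideal_of_disjoint_filter_ideal hdisj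
  have hmeet : ∀ x y : M, x ⊓ y ∈ J ↔ x ∈ J ∨ y ∈ J := by
    intro x y
    exact ⟨hJprime.mem_or_mem,
      fun hxy => hxy.elim (fun hx => J.lower inf_le_left hx) (fun hy => J.lower inf_le_right hy)⟩
  have hjoin : ∀ x y : M, x ⊔ y ∈ J ↔ x ∈ J ∧ y ∈ J := by
    intro x y
    exact ⟨fun hh => ⟨J.lower le_sup_left hh, J.lower le_sup_right hh⟩,
      fun hh => Order.Ideal.sup_mem hh.1 hh.2⟩
  refine ⟨fun x => decide (x ∉ J), ?_, ?_, ?_, ?_⟩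
  · intro x y
    have : (x ⊓ y ∉ J) ↔ (x ∉ J ∧ y ∉ J) := by rw [hmeet]; tauto
    simp only [this]
    cases hx : decide (x ∉ J) <;> cases hy : decide (y ∉ J) <;>
      simp_all
  · intro x y
    have : (x ⊔ y ∉ J) ↔ (x ∉ J ∨ y ∉ J) := by rw [hjoin]; tauto
    simp only [this]
    cases hx : decide (x ∉ J) <;> cases hy : decide (y ∉ J) <;>
      simp_all
  · have : a ∉ J := Set.disjoint_left.mp hdisjJ (Order.PFilter.mem_principal.mpr le_rfl)
    simp [this]
  · have : b ∈ J := hIJ Order.Ideal.mem_principal_self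
    simp [this]

/-- Validity in `Bool` implies validity in all distributive lattices. -/
lemma dlatValid_of_bool {α : Type} (e : LatEq α)
    (hb : ∀ w : α → Bool, e.1.realize w = e.2.realize w) : DLatValid e := by
  intro M _ v
  by_contra hne
  let c : M → WithTop (WithBot M) := fun x => ((x : WithBot M) : WithTop (WithBot M))
  have hcinf : ∀ x y : M, c (x ⊓ y) = c x ⊓ c y := by
    intro x y; simp only [c, WithBot.coe_inf, WithTop.coe_inf]
  have hcsup : ∀ x y : M, c (x ⊔ y) = c x ⊔ c y := by
    intro x y; simp only [c, WithBot.coe_sup, WithTop.coe_sup]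
  have hcinj : Function.Injective c := by
    intro x y hxy
    simpa [c] using hxy
  set a : WithTop (WithBot M) := c (e.1.realize v) with ha
  set b : WithTop (WithBot M) := c (e.2.realize v) with hbdef
  have hab : a ≠ b := fun hh => hne (hcinj hh)
  have hcases : ¬ a ≤ b ∨ ¬ b ≤ a := by
    by_contra hcon
    push_neg at hcon
    exact hab (le_antisymm hcon.1 hcon.2)
  have key : ∀ x y : WithTop (WithBot M), ¬ x ≤ y →
      ∃ f : WithTop (WithBot M) → Bool,
        (∀ u w, f (u ⊓ w) = f u ⊓ f w) ∧ (∀ u w, f (u ⊔ w) = f u ⊔ f w) ∧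
        f x = true ∧ f y = false := fun x y hxy => exists_bool_hom hxy
  rcases hcases with hle | hle
  · obtain ⟨f, hfi, hfs, hfa, hfb⟩ := key a b hle
    have h1 : e.1.realize (fun i => f (c (v i))) = f (c (e.1.realize v)) := by
      have := LatTerm.realize_map (fun x => f (c x))
        (fun x y => by show f (c (x ⊓ y)) = f (c x) ⊓ f (c y); rw [hcinf, hfi]) (fun x y => by show f (c (x ⊔ y)) = f (c x) ⊔ f (c y); rw [hcsup, hfs]) v e.1
      exact this
    have h2 : e.2.realize (fun i => f (c (v i))) = f (c (e.2.realize v)) := by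
      exact LatTerm.realize_map (fun x => f (c x))
        (fun x y => by show f (c (x ⊓ y)) = f (c x) ⊓ f (c y); rw [hcinf, hfi]) (fun x y => by show f (c (x ⊔ y)) = f (c x) ⊔ f (c y); rw [hcsup, hfs]) v e.2
    have := hb (fun i => f (c (v i)))
    rw [h1, h2, ← ha, ← hbdef, hfa, hfb] at this
    exact Bool.noConfusion this
  · obtain ⟨f, hfi, hfs, hfa, hfb⟩ := key b a hle
    have h1 : e.1.realize (fun i => f (c (v i))) = f (c (e.1.realize v)) := by
      exact LatTerm.realize_map (fun x => f (c x))
        (fun x y => by show f (c (x ⊓ y)) = f (c x) ⊓ f (c y); rw [hcinf, hfi]) (fun x y => by show f (c (x ⊔ y)) = f (c x) ⊔ f (c y); rw [hcsup, hfs]) v e.1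
    have h2 : e.2.realize (fun i => f (c (v i))) = f (c (e.2.realize v)) := by
      exact LatTerm.realize_map (fun x => f (c x))
        (fun x y => by show f (c (x ⊓ y)) = f (c x) ⊓ f (c y); rw [hcinf, hfi]) (fun x y => by show f (c (x ⊔ y)) = f (c x) ⊔ f (c y); rw [hcsup, hfs]) v e.2
    have := hb (fun i => f (c (v i)))
    rw [h1, h2, ← ha, ← hbdef, hfa, hfb] at this
    exact Bool.noConfusion this

lemma realize_foldl_meet {α : Type} (v : α → Bool) :
    ∀ (l : List (LatTerm α)) (a : LatTerm α),
      (l.foldl LatTerm.meet a).realize v = (a.realize v && l.all (fun t => t.realize v))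
  | [], a => by simp
  | b :: l, a => by
      rw [List.foldl_cons, realize_foldl_meet v l (a.meet b)]
      show ((a.realize v ⊓ b.realize v) && _) = _
      simp [Bool.and_assoc]

lemma realize_foldl_join {α : Type} (v : α → Bool) :
    ∀ (l : List (LatTerm α)) (a : LatTerm α),
      (l.foldl LatTerm.join a).realize v = (a.realize v || l.any (fun t => t.realize v))
  | [], a => by simp
  | b :: l, a => by
      rw [List.foldl_cons, realize_foldl_join v l (a.join b)]
      show ((a.realize v ⊔ b.realize v) || _) = _
      simp [Bool.or_assoc]

lemma realize_meetListNE {α : Type} (l : List (LatTerm α)) (h : l ≠ []) (v : α → Bool) :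
    (meetListNE l h).realize v = l.all (fun t => t.realize v) := by
  match l with
  | a :: l =>
    show (l.foldl LatTerm.meet a).realize v = _
    rw [realize_foldl_meet]
    simp

lemma realize_joinListNE {α : Type} (l : List (LatTerm α)) (h : l ≠ []) (v : α → Bool) :
    (joinListNE l h).realize v = l.any (fun t => t.realize v) := by
  match l with
  | a :: l =>
    show (l.foldl LatTerm.join a).realize v = _
    rw [realize_foldl_join]
    simp

lemma realize_finsetMeet_eq_true {γ α : Type} (S : Finset γ) (hS : S.Nonempty)
    (f : γ → LatTerm α) (v : α → Bool) :
    (finsetMeet S hS f).realize v = true ↔ ∀ i ∈ S, (f i).realize v = true := by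
  unfold finsetMeet
  rw [realize_meetListNE]
  simp [List.all_eq_true]

lemma realize_finsetJoin_eq_false {γ α : Type} (S : Finset γ) (hS : S.Nonempty)
    (f : γ → LatTerm α) (v : α → Bool) :
    (finsetJoin S hS f).realize v = false ↔ ∀ i ∈ S, (f i).realize v = false := by
  unfold finsetJoin
  rw [realize_joinListNE]
  constructor
  · intro h i hi
    exact Bool.eq_false_iff.mpr
      (List.any_eq_false.mp h _ (List.mem_map_of_mem (f := f) (Finset.mem_toList.mpr hi)))
  · intro h
    rw [List.any_eq_false]
    intro t ht
    obtain ⟨i, hi, rfl⟩ := List.mem_map.mp ht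
    exact Bool.eq_false_iff.mp (h i (Finset.mem_toList.mp hi))

theorem stmt10 (m : ℕ) : DLatRefuting (DeltaDL m) := by
  classical
  intro e
  constructor
  · -- ¬ valid → admissible
    intro hne
    -- failure in Bool
    have hbool : ¬ ∀ w : Fin (m + 2) → Bool, e.1.realize w = e.2.realize w := by
      intro hb
      exact hne (dlatValid_of_bool e hb)
    push_neg at hbool
    obtain ⟨w, hw⟩ := hbool
    set I : Finset (Fin (m + 2)) := Finset.univ.filter (fun i => w i = true) with hIdef
    have hmemI : ∀ i, i ∈ I ↔ w i = true := by
      intro i; simp [hIdef]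
    have hI : I.Nonempty := by
      by_contra hne'
      rw [Finset.not_nonempty_iff_eq_empty] at hne'
      have : w = fun _ => false := by
        funext i
        cases hwi : w i
        · rfl
        · exact absurd ((hmemI i).mpr hwi) (by simp [hne'])
      rw [this, LatTerm.realize_const, LatTerm.realize_const] at hw
      exact hw rfl
    have hIne : I ≠ Finset.univ := by
      intro hIu
      have : w = fun _ => true := by
        funext i
        exact (hmemI i).mp (hIu ▸ Finset.mem_univ i)
      rw [this, LatTerm.realize_const, LatTerm.realize_const] at hw
      exact hw rfl
    have hc : Iᶜ.Nonempty := by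
      rw [Finset.nonempty_iff_ne_empty]
      intro hcemp
      apply hIne
      apply Finset.eq_univ_of_forall
      intro i
      by_contra hi
      exact absurd (hcemp ▸ Finset.mem_compl.mpr hi) (Finset.notMem_empty i)
    intro σ hprem
    have hσ : DLatValid (e.1.subst σ, e.2.subst σ) := hprem e (Set.mem_singleton e)
    refine ⟨leEq (finsetMeet I hI LatTerm.var) (finsetJoin Iᶜ hc LatTerm.var),
      ⟨I, hI, hIne, hc, rfl⟩, ?_⟩
    apply dlatValid_of_bool
    intro u
    show ((((finsetMeet I hI LatTerm.var).meet
        (finsetJoin Iᶜ hc LatTerm.var)).subst σ).realize u) = _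
    rw [LatTerm.realize_subst', LatTerm.realize_subst']
    set u' : Fin (m + 2) → Bool := fun i => (σ i).realize u with hu'
    have hmeetvar : (finsetMeet I hI LatTerm.var).realize u' =
        (finsetMeet I hI (LatTerm.var : Fin (m+2) → LatTerm (Fin (m+2)))).realize u' := rfl
    show ((finsetMeet I hI LatTerm.var).realize u' ⊓
        (finsetJoin Iᶜ hc LatTerm.var).realize u') = (finsetMeet I hI LatTerm.var).realize u'
    set A := (finsetMeet I hI LatTerm.var).realize u'
    set B := (finsetJoin Iᶜ hc LatTerm.var).realize u'
    by_cases hA : A = true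
    · by_cases hB : B = true
      · rw [hA, hB]; rfl
      · -- A true, B false: contradiction with validity of σ(e)
        exfalso
        have hB' : B = false := by
          cases hBv : B
          · rfl
          · exact absurd hBv hB
        have hu'w : u' = w := by
          funext i
          by_cases hi : i ∈ I
          · have h1 : u' i = true := (realize_finsetMeet_eq_true I hI LatTerm.var u').mp hA i hi
            rw [h1, ((hmemI i).mp hi)]
          · have h1 : u' i = false :=
              (realize_finsetJoin_eq_false Iᶜ hc LatTerm.var u').mp hB' i
                (Finset.mem_compl.mpr hi)
            have h2 : w i = false := by
              cases hwi : w i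
              · rfl
              · exact absurd ((hmemI i).mpr hwi) hi
            rw [h1, h2]
          -- note realize of var is u'
        have := hσ Bool u
        rw [LatTerm.realize_subst', LatTerm.realize_subst'] at this
        rw [← hu'] at this
        rw [hu'w] at this
        exact hw this
    · have hA' : A = false := by
        cases hAv : A
        · rfl
        · exact absurd hAv hA
      rw [hA']
      cases B <;> rfl
  · -- admissible → ¬ valid
    intro hadm hv
    obtain ⟨d, hd, hdval⟩ := hadm (fun i => LatTerm.var (i : ℕ)) (by
      intro e' he'
      rw [Set.mem_singleton_iff] at he'
      subst he'
      intro M _ v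
      rw [LatTerm.realize_subst', LatTerm.realize_subst']
      exact hv M (fun i => (LatTerm.var (i : ℕ)).realize v))
    obtain ⟨I, hI, hIne, hc, rfl⟩ := hd
    set σ : Fin (m + 2) → LatTerm ℕ := fun i => LatTerm.var (i : ℕ) with hσdef
    set u : ℕ → Bool := fun k => decide (∃ i ∈ I, (i : ℕ) = k) with hudef
    have := hdval Bool u
    rw [LatTerm.realize_subst', LatTerm.realize_subst'] at this
    set u' : Fin (m + 2) → Bool := fun i => (σ i).realize u with hu'
    have hu'I : ∀ i : Fin (m + 2), u' i = true ↔ i ∈ I := by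
      intro i
      simp only [hu', hσdef, hudef, LatTerm.realize, decide_eq_true_eq]
      constructor
      · rintro ⟨j, hj, hji⟩
        rwa [Fin.val_injective hji] at hj
      · intro hi; exact ⟨i, hi, rfl⟩
    have hA : (finsetMeet I hI LatTerm.var).realize u' = true := by
      rw [realize_finsetMeet_eq_true]
      intro i hi
      exact (hu'I i).mpr hi
    have hB : (finsetJoin Iᶜ hc LatTerm.var).realize u' = false := by
      rw [realize_finsetJoin_eq_false]
      intro i hi
      show u' i = false
      cases hui : u' i
      · rfl
      · exact absurd ((hu'I i).mp hui) (Finset.mem_compl.mp hi)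
    have : ((finsetMeet I hI LatTerm.var).realize u' ⊓
        (finsetJoin Iᶜ hc LatTerm.var).realize u') =
        (finsetMeet I hI LatTerm.var).realize u' := this
    rw [hA, hB] at this
    exact Bool.noConfusion this
end
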